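/- If n or n − 1 is a prime number with n ≥ 3, then the symmetric group S_n contains a self-centralizing cyclic subgroup generated by an n-cycle (respectively an (n−1)-cycle), i.e., a subgroup ⟨σ⟩ with C_{S_n}(σᵏ) = ⟨σ⟩ for all σᵏ ≠ 1; consequently the nilpotent graph of S_n is disconnected. -/

import Mathlib

def nilpotentizer (G : Type*) [Group G] : Set G :=
  {g | ∀ h : G, Group.IsNilpotent (Subgroup.closure ({g, h} : Set G))}

def nilpotentizerOf {G : Type*} [Group G] (x : G) : Set G :=
  {g | Group.IsNilpotent (Subgroup.closure ({g, x} : Set G))}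

def nilpotentGraph (G : Type*) [Group G] :
    SimpleGraph {x : G // x ∉ nilpotentizer G} where
  Adj a b := a ≠ b ∧ Group.IsNilpotent (Subgroup.closure ({(a : G), (b : G)} : Set G))
  symm := ⟨fun a b ⟨hne, h⟩ => ⟨fun e => hne e.symm, by rwa [Set.pair_comm]⟩⟩
  loopless := ⟨fun a ⟨h, _⟩ => h rfl⟩

noncomputable def hypercenter (G : Type*) [Group G] : Subgroup G := Subgroup.upperCentralSeries G (Nat.card G)

instance {G : Type*} [Group G] : (hypercenter G).Normal := by
  unfold hypercenter; infer_instance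

open Equiv Equiv.Perm Subgroup

-- Lemma A: centralizer of a cycle whose support misses at most one point
lemma centralizer_of_big_cycle {n : ℕ} {c : Equiv.Perm (Fin n)} (hc : c.IsCycle)
    (hcard : n ≤ c.support.card + 1) :
    Subgroup.centralizer {c} = Subgroup.zpowers c := by
  apply le_antisymm
  · intro τ hτ
    have hcom : c * τ = τ * c := Subgroup.mem_centralizer_iff.mp hτ c rfl
    obtain ⟨a, ha, htr⟩ := hc
    have hτa : c (τ a) ≠ τ a := by
      have h1 : c (τ a) = τ (c a) := by
        rw [← Equiv.Perm.mul_apply, hcom, Equiv.Perm.mul_apply]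
      rw [h1]
      exact fun e => ha (τ.injective e)
    obtain ⟨j, hj⟩ := htr hτa
    have hzc : ∀ i : ℤ, τ * c ^ i = c ^ i * τ := fun i =>
      (Commute.zpow_right (by exact hcom.symm) i)
    have hτe : τ = c ^ j := by
      apply Equiv.ext
      intro x
      by_cases hx : c x = x
      · have h1 : (c ^ j) x = x := by
          rw [← Equiv.Perm.notMem_support] at hx
          rw [← Equiv.Perm.notMem_support]
          exact fun hmem => hx (Equiv.Perm.support_zpow_le c j hmem)
        have h2 : c (τ x) = τ x := by
          rw [← Equiv.Perm.mul_apply, hcom, Equiv.Perm.mul_apply, hx]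
        -- complement has at most one point
        have hcompl : (c.supportᶜ : Finset (Fin n)).card ≤ 1 := by
          rw [Finset.card_compl]
          simp only [Fintype.card_fin]
          omega
        have hx1 : x ∈ c.supportᶜ := by simp [Equiv.Perm.notMem_support.mpr hx]
        have hx2 : τ x ∈ c.supportᶜ := by simp [Equiv.Perm.notMem_support.mpr h2]
        rw [h1]
        exact Finset.card_le_one.mp hcompl _ hx2 _ hx1
      · obtain ⟨i, hi⟩ := htr hx
        calc τ x = τ ((c ^ i) a) := by rw [hi]
          _ = (c ^ i) (τ a) := by rw [← Equiv.Perm.mul_apply, hzc, Equiv.Perm.mul_apply]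
          _ = (c ^ i) ((c ^ j) a) := by rw [hj]
          _ = (c ^ j) ((c ^ i) a) := by
              rw [← Equiv.Perm.mul_apply, ← Equiv.Perm.mul_apply, ← zpow_add, ← zpow_add,
                add_comm]
          _ = (c ^ j) x := by rw [hi]
    exact hτe ▸ zpow_mem (Subgroup.mem_zpowers c) j
  · rintro x ⟨k, rfl⟩
    rw [Subgroup.mem_centralizer_iff]
    intro g hg
    have hg' : g = c := hg
    subst hg'
    show g * g ^ k = g ^ k * g
    exact Commute.zpow_right (Commute.refl g) k

-- Lemma B/C : centralizers of nontrivial powers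
lemma centralizer_pow_of_prime {n : ℕ} {σ : Equiv.Perm (Fin n)} (hc : σ.IsCycle)
    (hp : (σ.support.card).Prime) (hcard : n ≤ σ.support.card + 1) :
    ∀ k : ℕ, σ ^ k ≠ 1 → Subgroup.centralizer {σ ^ k} = Subgroup.zpowers σ := by
  intro k hk
  have hord : orderOf σ = σ.support.card := hc.orderOf
  have hnd : ¬ (orderOf σ ∣ k) := fun hd => hk (orderOf_dvd_iff_pow_eq_one.mp hd)
  have hcop : Nat.Coprime k (orderOf σ) := by
    rw [hord] at hnd ⊢
    exact ((hp.coprime_iff_not_dvd).mpr hnd).symm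
  obtain ⟨m, hm⟩ := exists_pow_eq_self_of_coprime hcop
  apply le_antisymm
  · intro τ hτ
    have h1 : σ ^ k * τ = τ * σ ^ k := Subgroup.mem_centralizer_iff.mp hτ _ rfl
    have h2 : Commute (σ ^ k) τ := h1
    have h3 : σ * τ = τ * σ := by
      have h4 : Commute ((σ ^ k) ^ m) τ := h2.pow_left m
      rw [hm] at h4
      exact h4
    have : τ ∈ Subgroup.centralizer {σ} := by
      rw [Subgroup.mem_centralizer_iff]
      intro g hg
      have hg' : g = σ := hg
      subst hg'
      exact h3
    rwa [centralizer_of_big_cycle hc hcard] at this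
  · rintro x ⟨j, rfl⟩
    rw [Subgroup.mem_centralizer_iff]
    intro g hg
    have hg' : g = σ ^ k := hg
    subst hg'
    show σ ^ k * σ ^ j = σ ^ j * σ ^ k
    exact (((Commute.refl σ).pow_left k).zpow_right j)

-- nontrivial nilpotent group has a nontrivial central element
lemma exists_center_ne_one {H : Type*} [Group H] [hnil : Group.IsNilpotent H]
    (hnt : ∃ x : H, x ≠ 1) : ∃ z : H, z ∈ Subgroup.center H ∧ z ≠ 1 := by
  obtain ⟨n, hn⟩ := Subgroup.nilpotent_iff_lowerCentralSeries.mp hnil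
  induction n with
  | zero =>
    obtain ⟨x, hx⟩ := hnt
    exact absurd ((Subgroup.eq_bot_iff_forall _).mp hn x (by rw [Subgroup.lowerCentralSeries_zero]; trivial)) hx
  | succ n ih =>
    by_cases hb : (⊤ : Subgroup H).lowerCentralSeries n = ⊥
    · exact ih hb
    · rw [Subgroup.eq_bot_iff_forall] at hb
      push_neg at hb
      obtain ⟨z, hz, hz1⟩ := hb
      refine ⟨z, ?_, hz1⟩
      rw [Subgroup.mem_center_iff]
      intro g
      have hcomm : z * g * z⁻¹ * g⁻¹ = 1 := by
        have hmem : z * g * z⁻¹ * g⁻¹ ∈ (⊤ : Subgroup H).lowerCentralSeries (n + 1) := by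
          rw [Subgroup.mem_lowerCentralSeries_succ_iff]
          exact Subgroup.subset_closure ⟨z, hz, g, trivial, rfl⟩
        rw [hn] at hmem
        exact hmem
      have := mul_eq_one_iff_eq_inv.mp hcomm
      calc g * z = (z * g * z⁻¹ * g⁻¹) * (g * z) := by rw [hcomm, one_mul]
        _ = z * g := by group

-- the key propagation lemma
lemma key_lemma {n : ℕ} {σ : Equiv.Perm (Fin n)}
    (hcent : ∀ k : ℕ, σ ^ k ≠ 1 → Subgroup.centralizer {σ ^ k} = Subgroup.zpowers σ)
    {x y : Equiv.Perm (Fin n)} (hx : x ∈ Subgroup.zpowers σ) (hx1 : x ≠ 1)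
    (hnil : Group.IsNilpotent
      (Subgroup.closure ({x, y} : Set (Equiv.Perm (Fin n))))) :
    y ∈ Subgroup.zpowers σ := by
  set H := Subgroup.closure ({x, y} : Set (Equiv.Perm (Fin n))) with hH
  have hxH : x ∈ H := Subgroup.subset_closure (by simp)
  have hyH : y ∈ H := Subgroup.subset_closure (by simp)
  have hnt : ∃ w : H, w ≠ 1 := ⟨⟨x, hxH⟩, by
    intro e
    exact hx1 (congrArg Subtype.val e)⟩
  obtain ⟨z, hzc, hz1⟩ := exists_center_ne_one (H := H) hnt
  have hz1' : (z : Equiv.Perm (Fin n)) ≠ 1 := by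
    intro e
    exact hz1 (Subtype.ext e)
  -- x as a natural power of σ
  obtain ⟨k, hk⟩ : ∃ k : ℕ, σ ^ k = x := by
    have := mem_powers_iff_mem_zpowers.mpr hx
    exact (Submonoid.mem_powers_iff _ _).mp this
  have hk1 : σ ^ k ≠ 1 := by rw [hk]; exact hx1
  -- z commutes with x, hence z ∈ zpowers σ
  have hzx : (z : Equiv.Perm (Fin n)) ∈ Subgroup.centralizer {σ ^ k} := by
    rw [Subgroup.mem_centralizer_iff]
    intro g hg
    have hg' : g = σ ^ k := hg
    subst hg'
    rw [hk]
    have := (Subgroup.mem_center_iff.mp hzc) ⟨x, hxH⟩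
    exact congrArg Subtype.val this
  rw [hcent k hk1] at hzx
  obtain ⟨m, hm⟩ : ∃ m : ℕ, σ ^ m = (z : Equiv.Perm (Fin n)) := by
    have := mem_powers_iff_mem_zpowers.mpr hzx
    exact (Submonoid.mem_powers_iff _ _).mp this
  have hm1 : σ ^ m ≠ 1 := by rw [hm]; exact hz1'
  have hyz : y ∈ Subgroup.centralizer {σ ^ m} := by
    rw [Subgroup.mem_centralizer_iff]
    intro g hg
    have hg' : g = σ ^ m := hg
    subst hg'
    rw [hm]
    have := (Subgroup.mem_center_iff.mp hzc) ⟨y, hyH⟩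
    exact (congrArg Subtype.val this).symm
  rwa [hcent m hm1] at hyz

lemma one_mem_nilpotentizer (G : Type*) [Group G] : (1 : G) ∈ nilpotentizer G := by
  intro h
  have hcl : Subgroup.closure ({(1 : G), h} : Set G) = Subgroup.zpowers h := by
    apply le_antisymm
    · rw [Subgroup.closure_le]
      intro x hx
      rcases hx with rfl | hx
      · exact Subgroup.one_mem _
      · rw [Set.mem_singleton_iff] at hx
        subst hx
        exact Subgroup.mem_zpowers x
    · rw [Subgroup.zpowers_eq_closure]
      exact Subgroup.closure_mono (by simp)
  rw [hcl]
  exact ⟨⟨1, Subgroup.upperCentralSeries_one_eq_top_iff.mpr inferInstance⟩⟩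

theorem symmGroup_selfCentralizing_cycle_and_disconnected (n : ℕ) (hn : 3 ≤ n)
    (h : Nat.Prime n ∨ Nat.Prime (n - 1)) :
    ((Nat.Prime n → ∃ σ : Equiv.Perm (Fin n), σ.IsCycle ∧ σ.support.card = n ∧
        ∀ k : ℕ, σ ^ k ≠ 1 → Subgroup.centralizer {σ ^ k} = Subgroup.zpowers σ) ∧
      (Nat.Prime (n - 1) → ∃ σ : Equiv.Perm (Fin n), σ.IsCycle ∧ σ.support.card = n - 1 ∧
        ∀ k : ℕ, σ ^ k ≠ 1 → Subgroup.centralizer {σ ^ k} = Subgroup.zpowers σ)) ∧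
    ¬ (nilpotentGraph (Equiv.Perm (Fin n))).Connected := by
  obtain ⟨m, rfl⟩ : ∃ m, n = m + 1 := ⟨n - 1, by omega⟩
  have build : ∀ t : ℕ, 2 ≤ t → m ≤ t → t ≤ m + 1 → Nat.Prime t →
      ∃ σ : Equiv.Perm (Fin (m + 1)), σ.IsCycle ∧ σ.support.card = t ∧
        ∀ k : ℕ, σ ^ k ≠ 1 → Subgroup.centralizer {σ ^ k} = Subgroup.zpowers σ := by
    intro t h2 hmt hle hp
    have hi0 : (⟨t - 1, by omega⟩ : Fin (m + 1)) ≠ 0 := by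
      intro e
      have := congrArg Fin.val e
      simp at this
      omega
    set i : Fin (m + 1) := ⟨t - 1, by omega⟩ with hidef
    have hcyc : (Fin.cycleRange i).IsCycle := Fin.isCycle_cycleRange hi0
    have hcard : (Fin.cycleRange i).support.card = t := by
      have h1 := Fin.cycleType_cycleRange hi0
      have h2' := Equiv.Perm.sum_cycleType (Fin.cycleRange i)
      rw [h1] at h2'
      simp only [Multiset.sum_singleton] at h2'
      have : (i : ℕ) = t - 1 := rfl
      omega
    refine ⟨Fin.cycleRange i, hcyc, hcard, ?_⟩
    exact centralizer_pow_of_prime hcyc (hcard ▸ hp) (by omega)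
  have hmm : m + 1 - 1 = m := by omega
  have part1 : Nat.Prime (m + 1) → ∃ σ : Equiv.Perm (Fin (m + 1)), σ.IsCycle ∧
      σ.support.card = m + 1 ∧
      ∀ k : ℕ, σ ^ k ≠ 1 → Subgroup.centralizer {σ ^ k} = Subgroup.zpowers σ :=
    fun hp => build (m + 1) (by omega) (by omega) le_rfl hp
  have part2 : Nat.Prime (m + 1 - 1) → ∃ σ : Equiv.Perm (Fin (m + 1)), σ.IsCycle ∧
      σ.support.card = m + 1 - 1 ∧
      ∀ k : ℕ, σ ^ k ≠ 1 → Subgroup.centralizer {σ ^ k} = Subgroup.zpowers σ := by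
    rw [hmm]
    exact fun hp => build m hp.two_le le_rfl (by omega) hp
  refine ⟨⟨part1, part2⟩, ?_⟩
  -- pick a suitable σ
  obtain ⟨σ, hcyc, hcard_le, hcent⟩ :
      ∃ σ : Equiv.Perm (Fin (m + 1)), σ.IsCycle ∧ σ.support.card ≤ m + 1 ∧
        ∀ k : ℕ, σ ^ k ≠ 1 → Subgroup.centralizer {σ ^ k} = Subgroup.zpowers σ := by
    rcases h with hp | hp
    · obtain ⟨σ, h1, h2, h3⟩ := part1 hp
      exact ⟨σ, h1, by omega, h3⟩
    · obtain ⟨σ, h1, h2, h3⟩ := part2 hp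
      exact ⟨σ, h1, by omega, h3⟩
  have hσ1 : σ ≠ 1 := hcyc.ne_one
  -- zpowers σ is a proper subgroup
  have hne : Subgroup.zpowers σ ≠ ⊤ := by
    intro htop
    have h1 : Nat.card (Subgroup.zpowers σ) = orderOf σ := Nat.card_zpowers σ
    rw [htop, Subgroup.card_top] at h1
    have h2 : Nat.card (Equiv.Perm (Fin (m + 1))) = (m + 1).factorial := by
      rw [Nat.card_eq_fintype_card, Fintype.card_perm, Fintype.card_fin]
    have h3 : orderOf σ = σ.support.card := hcyc.orderOf
    have h4 : m + 1 < (m + 1).factorial := Nat.lt_factorial_self hn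
    omega
  obtain ⟨τ, hτ⟩ : ∃ τ : Equiv.Perm (Fin (m + 1)), τ ∉ Subgroup.zpowers σ := by
    by_contra hcon
    push_neg at hcon
    exact hne ((Subgroup.eq_top_iff' _).mpr hcon)
  have hσnil : σ ∉ nilpotentizer (Equiv.Perm (Fin (m + 1))) := fun hmem =>
    hτ (key_lemma hcent (Subgroup.mem_zpowers σ) hσ1 (hmem τ))
  have hτnil : τ ∉ nilpotentizer (Equiv.Perm (Fin (m + 1))) := by
    intro hmem
    have h1 := hmem σ
    rw [Set.pair_comm] at h1
    exact hτ (key_lemma hcent (Subgroup.mem_zpowers σ) hσ1 h1)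
  intro hconn
  obtain ⟨p⟩ := hconn.preconnected ⟨σ, hσnil⟩ ⟨τ, hτnil⟩
  have main : ∀ (u v : {x : Equiv.Perm (Fin (m + 1)) // x ∉ nilpotentizer _}),
      (nilpotentGraph (Equiv.Perm (Fin (m + 1)))).Walk u v →
      (u : Equiv.Perm (Fin (m + 1))) ∈ Subgroup.zpowers σ →
      (v : Equiv.Perm (Fin (m + 1))) ∈ Subgroup.zpowers σ := by
    intro u v p
    induction p with
    | nil => exact id
    | @cons a b c hadj p ih =>
      intro hu
      refine ih (key_lemma hcent hu ?_ (show _ ∧ _ from hadj).2)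
      intro e
      exact a.prop (e ▸ one_mem_nilpotentizer _)
  exact hτ (main _ _ p (Subgroup.mem_zpowers σ))
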